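/- (Univariate SCAD thresholding, small-signal case.) Let z ∈ ℝ, Λ > 0, λ > 0, and a > 2, and suppose |z| ≤ λ. Then β̂ = sgn(z)(|z| − Λλ)₊ is a global minimizer over β ∈ ℝ of R(β) = (1/2)(z − β)² + Λ p_λ(|β|). -/
import Mathlib

noncomputable section

/-- Derivative of the SCAD penalty: `p_λ′(u) = λ[1{u ≤ λ} + (aλ−u)₊/((a−1)λ)·1{u > λ}]`. -/
def scadDeriv (l a u : ℝ) : ℝ :=
  l * ((if u ≤ l then 1 else 0) + max (a * l - u) 0 / ((a - 1) * l) * (if l < u then 1 else 0))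

/-- The SCAD penalty `p_λ(t) = ∫₀ᵗ p_λ′(u) du`. -/
def scad (l a t : ℝ) : ℝ := ∫ u in (0:ℝ)..t, scadDeriv l a u

lemma scadDeriv_nonneg (l a u : ℝ) (hl : 0 < l) (ha : 2 < a) : 0 ≤ scadDeriv l a u := by
  unfold scadDeriv
  have h1 : 0 < (a - 1) * l := by nlinarith
  apply mul_nonneg hl.le
  apply add_nonneg
  · split_ifs <;> norm_num
  · apply mul_nonneg
    · exact div_nonneg (le_max_right _ _) h1.le
    · split_ifs <;> norm_num

lemma scadDeriv_le (l a u : ℝ) (hl : 0 < l) (ha : 2 < a) : scadDeriv l a u ≤ l := by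
  unfold scadDeriv
  have h1 : 0 < (a - 1) * l := by nlinarith
  rcases le_or_gt u l with h | h
  · rw [if_pos h, if_neg (not_lt.mpr h)]
    ring_nf
    exact le_rfl
  · rw [if_neg (not_le.mpr h), if_pos h]
    have hm : max (a * l - u) 0 ≤ (a - 1) * l := max_le (by nlinarith) h1.le
    have hd : max (a * l - u) 0 / ((a - 1) * l) ≤ 1 := (div_le_one h1).mpr hm
    have hd0 : 0 ≤ max (a * l - u) 0 / ((a - 1) * l) := div_nonneg (le_max_right _ _) h1.le
    nlinarith

lemma scadDeriv_measurable (l a : ℝ) : Measurable (scadDeriv l a) := by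
  unfold scadDeriv
  apply Measurable.const_mul
  apply Measurable.add
  · exact Measurable.ite (measurableSet_le measurable_id measurable_const)
      measurable_const measurable_const
  · apply Measurable.mul
    · exact ((measurable_const.sub measurable_id).max measurable_const).div measurable_const
    · exact Measurable.ite (measurableSet_lt measurable_const measurable_id)
        measurable_const measurable_const

lemma scadDeriv_intervalIntegrable (l a : ℝ) (hl : 0 < l) (ha : 2 < a) (x y : ℝ) :
    IntervalIntegrable (scadDeriv l a) MeasureTheory.volume x y := by
  apply IntervalIntegrable.mono_fun (intervalIntegrable_const (c := l))
  · exact (scadDeriv_measurable l a).aestronglyMeasurable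
  · filter_upwards with u
    rw [Real.norm_eq_abs, Real.norm_eq_abs, abs_of_nonneg (scadDeriv_nonneg l a u hl ha),
      abs_of_pos hl]
    exact scadDeriv_le l a u hl ha

lemma scad_eq (l a t : ℝ) (ht : 0 ≤ t) (htl : t ≤ l) : scad l a t = l * t := by
  unfold scad
  rw [intervalIntegral.integral_congr (g := fun _ => l) ?_, intervalIntegral.integral_const]
  · simp [smul_eq_mul]; ring
  · intro u hu
    rw [Set.uIcc_of_le ht] at hu
    have h : u ≤ l := le_trans hu.2 htl
    unfold scadDeriv
    rw [if_pos h, if_neg (not_lt.mpr h)]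
    ring

lemma scad_ge (l a t : ℝ) (hl : 0 < l) (ha : 2 < a) (ht : l ≤ t) : l * l ≤ scad l a t := by
  have h1 : scad l a l = l * l := scad_eq l a l hl.le le_rfl
  have h2 : scad l a t = scad l a l + ∫ u in l..t, scadDeriv l a u := by
    unfold scad
    rw [intervalIntegral.integral_add_adjacent_intervals
      (scadDeriv_intervalIntegrable l a hl ha 0 l) (scadDeriv_intervalIntegrable l a hl ha l t)]
  have h3 : 0 ≤ ∫ u in l..t, scadDeriv l a u :=
    intervalIntegral.integral_nonneg ht (fun u _ => scadDeriv_nonneg l a u hl ha)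
  rw [h2, h1]; linarith

/-- univariate SCAD thresholding, small-signal case. -/
theorem scad_thresholding_small_signal
    (z Λ l a : ℝ) (hΛ : 0 < Λ) (hl : 0 < l) (ha : 2 < a)
    (hz : |z| ≤ l) :
    ∀ β : ℝ,
      1 / 2 * (z - Real.sign z * max (|z| - Λ * l) 0) ^ 2
          + Λ * scad l a |Real.sign z * max (|z| - Λ * l) 0|
        ≤ 1 / 2 * (z - β) ^ 2 + Λ * scad l a |β| := by
  intro β
  set w := |z| with hwdef
  set m := max (|z| - Λ * l) 0 with hmdef
  have hw0 : 0 ≤ w := abs_nonneg z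
  have hm0 : 0 ≤ m := le_max_right _ _
  have hΛl : 0 < Λ * l := mul_pos hΛ hl
  have hmw : m ≤ w := max_le (by linarith) hw0
  have hml : m ≤ l := le_trans hmw hz
  have habs : |Real.sign z * m| = m := by
    rcases lt_trichotomy z 0 with h | h | h
    · rw [Real.sign_of_neg h]; rw [abs_mul]; simp [abs_of_nonneg hm0]
    · have hm' : m = 0 := by
        rw [hmdef, h]; simp; linarith
      simp [h, hm']
    · rw [Real.sign_of_pos h]; rw [abs_mul]; simp [abs_of_nonneg hm0]
  have hsq : (z - Real.sign z * m) ^ 2 = (w - m) ^ 2 := by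
    rcases lt_trichotomy z 0 with h | h | h
    · rw [Real.sign_of_neg h]
      have hwz : w = -z := abs_of_neg h
      rw [hwz]; ring
    · have hm' : m = 0 := by rw [hmdef, h]; simp; linarith
      rw [h, hm']; simp [hwdef, h]
    · rw [Real.sign_of_pos h]
      have hwz : w = z := abs_of_pos h
      rw [hwz]; ring
  rw [habs, hsq, scad_eq l a m hm0 hml]
  set t := |β| with htdef
  have ht0 : 0 ≤ t := abs_nonneg β
  have hβ : (w - t) ^ 2 ≤ (z - β) ^ 2 := by
    have h1 : |w - t| ≤ |z - β| := abs_abs_sub_abs_le_abs_sub z β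
    calc (w - t) ^ 2 = |w - t| ^ 2 := (sq_abs _).symm
      _ ≤ |z - β| ^ 2 := by
          have := abs_nonneg (w - t)
          nlinarith
      _ = (z - β) ^ 2 := sq_abs _
  have key : 1 / 2 * (w - m) ^ 2 + Λ * (l * m) ≤ 1 / 2 * (w - t) ^ 2 + Λ * scad l a t := by
    rcases le_or_gt t l with htl | htl
    · rw [scad_eq l a t ht0 htl]
      rcases le_or_gt w (Λ * l) with hwΛ | hwΛ
      · have hm' : m = 0 := max_eq_right (by linarith)
        rw [hm']
        nlinarith [mul_nonneg (by linarith : (0:ℝ) ≤ Λ * l - w) ht0, sq_nonneg t]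
      · have hm' : m = w - Λ * l := max_eq_left (by linarith)
        rw [hm']
        nlinarith [sq_nonneg (t - (w - Λ * l))]
    · have hs : l * l ≤ scad l a t := scad_ge l a t hl ha htl.le
      have hs' : Λ * (l * l) ≤ Λ * scad l a t := by
        exact mul_le_mul_of_nonneg_left hs hΛ.le
      rcases le_or_gt w (Λ * l) with hwΛ | hwΛ
      · have hm' : m = 0 := max_eq_right (by linarith)
        rw [hm']
        nlinarith [sq_nonneg (w - t), mul_le_mul hwΛ hz hw0 hΛl.le]
      · have hm' : m = w - Λ * l := max_eq_left (by linarith)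
        rw [hm']
        nlinarith [sq_nonneg (w - t), mul_le_mul_of_nonneg_left hz hΛl.le, sq_nonneg (Λ * l)]
  linarith [mul_le_mul_of_nonneg_left (le_of_eq (rfl : scad l a t = scad l a t)) hΛ.le, key, hβ]
  
end
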